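/- Let E be a finite-dimensional real normed space, let u, g : E → ℝ be functions differentiable at a point b ∈ E, and suppose u(b) = 0. Then the function z ↦ g(z)·cosh(u(z)) has the same value and the same Fréchet derivative at b as g, and likewise the function z ↦ g(z)/cosh(u(z)) has the same value and the same Fréchet derivative at b as g. -/

import Mathlib

/-- **Multiplication or division by `cosh ∘ u` preserves first-order contact at
zeros of `u`.**  If `u, g : E → ℝ` are differentiable at `b` and `u b = 0`, then
`g · (cosh ∘ u)` and `g / (cosh ∘ u)` have the same value and the same Fréchet
derivative at `b` as `g`. -/
theorem firstOrderContact_mul_div_cosh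
    {E : Type*} [NormedAddCommGroup E] [NormedSpace ℝ E] [FiniteDimensional ℝ E]
    (u g : E → ℝ) (b : E)
    (hu : DifferentiableAt ℝ u b) (hg : DifferentiableAt ℝ g b)
    (hub : u b = 0) :
    (g b * Real.cosh (u b) = g b ∧
      fderiv ℝ (fun z => g z * Real.cosh (u z)) b = fderiv ℝ g b) ∧
    (g b / Real.cosh (u b) = g b ∧
      fderiv ℝ (fun z => g z / Real.cosh (u z)) b = fderiv ℝ g b) := by
  have hc : DifferentiableAt ℝ (fun z => Real.cosh (u z)) b := hu.cosh
  have hfc : fderiv ℝ (fun z => Real.cosh (u z)) b = 0 := by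
    rw [fderiv_cosh hu, hub, Real.sinh_zero, zero_smul]
  have hne : Real.cosh (u b) ≠ 0 := by positivity
  have hci : DifferentiableAt ℝ (fun z => (Real.cosh (u z))⁻¹) b := hc.inv hne
  have hfci : fderiv ℝ (fun z => (Real.cosh (u z))⁻¹) b = 0 := by
    have : (fun z => (Real.cosh (u z))⁻¹) = Inv.inv ∘ (fun z => Real.cosh (u z)) := rfl
    rw [this, fderiv_comp b (differentiableAt_inv hne) hc, hfc,
      ContinuousLinearMap.comp_zero]
  constructor
  · refine ⟨by rw [hub, Real.cosh_zero, mul_one], ?_⟩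
    rw [fderiv_fun_mul hg hc, hfc, hub, Real.cosh_zero, smul_zero, zero_add, one_smul]
  · refine ⟨by rw [hub, Real.cosh_zero, div_one], ?_⟩
    simp only [div_eq_mul_inv]
    rw [fderiv_fun_mul hg hci, hfci, hub, Real.cosh_zero, smul_zero, zero_add, inv_one, one_smul]
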